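/- arXiv:2309.14555 — 5 statements merged into one kernel-verified Lean document; each statement's English description precedes it below -/
import Mathlib

section
/- Let k ≥ 1, λ ≥ 0 with β = λ·(k−1) > 1. Consider the deterministic sequence σ of n candidates in ℝ^k where the t-th candidate has value β^(⌈t/k⌉−1) in coordinate (t mod k) and 0 elsewhere. If the biased gambler selects the first candidate of any 'row' i (i.e., candidate at index (i−1)·k+1 for i ≥ 2), their utility ‖σ^(t)‖₁ − λ·(‖s^(t)‖₁ − ‖σ^(t)‖₁) equals 0, where s^(t) is the coordinate-wise maximum of all candidates up to time t. -/
open Finset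

noncomputable def norm1 {k : ℕ} (v : Fin k → ℝ) : ℝ := ∑ j, v j

noncomputable def superCand {n k : ℕ} (σ : Fin n → Fin k → ℝ) (t : Fin n) (j : Fin k) : ℝ :=
  (Finset.Iic t).sup' ⟨t, Finset.mem_Iic.2 le_rfl⟩ (fun w => σ w j)

noncomputable def biasedU {n k : ℕ} (lam : ℝ) (σ : Fin n → Fin k → ℝ) (t : Fin n) : ℝ :=
  norm1 (σ t) - lam * (norm1 (fun j => superCand σ t j) - norm1 (σ t))

theorem stmt0 (n k : ℕ) (lam : ℝ) (hk : 1 ≤ k) (hlam : 0 ≤ lam)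
    (hβ : 1 < lam * ((k : ℝ) - 1))
    (σ : Fin n → Fin k → ℝ)
    (hσ : ∀ (t : Fin n) (j : Fin k), σ t j =
      if (j : ℕ) = (t : ℕ) % k then (lam * ((k : ℝ) - 1)) ^ ((t : ℕ) / k) else 0)
    (i : ℕ) (hi : 2 ≤ i) (ht : (i - 1) * k < n) :
    biasedU lam σ ⟨(i - 1) * k, ht⟩ = 0 := by
  obtain ⟨m, rfl⟩ := Nat.exists_eq_add_of_le hi
  set β : ℝ := lam * ((k : ℝ) - 1) with hβdef
  have hβ0 : (0:ℝ) < β := lt_trans one_pos hβ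
  have hβ1 : (1:ℝ) ≤ β := le_of_lt hβ
  have hk2 : 2 ≤ k := by
    by_contra h
    have : k = 1 := by omega
    simp [hβdef, this] at hβ0
  have hkpos : 0 < k := by omega
  haveI : NeZero k := ⟨by omega⟩
  have h1 : 2 + m - 1 = m + 1 := by omega
  simp only [h1] at ht ⊢
  set t : Fin n := ⟨(m + 1) * k, ht⟩ with htdef
  have htval : (t : ℕ) = (m + 1) * k := rfl
  have htmod : (t : ℕ) % k = 0 := by rw [htval]; exact Nat.mul_mod_left _ _
  have htdiv : (t : ℕ) / k = m + 1 := by rw [htval]; exact Nat.mul_div_cancel _ hkpos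
  -- superCand value
  have hsup : ∀ j : Fin k, superCand σ t j = if j = 0 then β ^ (m + 1) else β ^ m := by
    intro j
    unfold superCand
    apply le_antisymm
    · apply Finset.sup'_le
      intro w hw
      have hwle : (w : ℕ) ≤ (m + 1) * k := by
        have := Finset.mem_Iic.1 hw
        rw [Fin.le_def, htval] at this
        exact this
      rw [hσ]
      by_cases hj : j = 0
      · simp only [hj, if_pos]
        split
        · have hd : (w : ℕ) / k ≤ m + 1 := by
            have h2 := Nat.div_le_div_right (c := k) hwle
            rwa [Nat.mul_div_cancel _ hkpos] at h2
          exact pow_le_pow_right₀ hβ1 hd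
        · positivity
      · simp only [hj, if_neg, if_false]
        split
        · rename_i hcond
          have hjne : (j : ℕ) ≠ 0 := fun h => hj (Fin.ext (by simpa using h))
          have hwlt : (w : ℕ) < (m + 1) * k := by
            rcases lt_or_eq_of_le hwle with h | h
            · exact h
            · exfalso; apply hjne; rw [hcond, h, Nat.mul_mod_left]
          have hdiv : (w : ℕ) / k ≤ m := by
            have := (Nat.div_lt_iff_lt_mul hkpos).2 hwlt
            omega
          exact pow_le_pow_right₀ hβ1 hdiv
        · positivity
    · by_cases hj : j = 0
      · simp only [hj, if_pos]
        refine Finset.le_sup'_of_le _ (Finset.mem_Iic.2 (le_refl t)) ?_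
        rw [hσ]
        simp [htmod, htdiv, hj]
      · simp only [hj, if_neg, if_false]
        have hjne : (j : ℕ) ≠ 0 := fun h => hj (Fin.ext (by simpa using h))
        have hjk : (j : ℕ) < k := j.isLt
        have hwn : m * k + (j : ℕ) < n := by
          calc m * k + (j:ℕ) < (m+1) * k := by nlinarith
          _ < n := ht
        refine Finset.le_sup'_of_le _ (Finset.mem_Iic.2 (show (⟨m * k + j, hwn⟩ : Fin n) ≤ t by
          simp only [Fin.le_def, htval]; nlinarith)) ?_
        rw [hσ]
        have hmod : (m * k + (j:ℕ)) % k = (j:ℕ) := by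
          rw [Nat.mul_comm, Nat.mul_add_mod, Nat.mod_eq_of_lt hjk]
        have hdiv : (m * k + (j:ℕ)) / k = m := by
          rw [Nat.mul_comm, Nat.mul_add_div hkpos, Nat.div_eq_of_lt hjk]
          omega
        simp [hmod, hdiv]
  -- norm1 of σ t
  have hn1 : norm1 (σ t) = β ^ (m + 1) := by
    unfold norm1
    have : ∀ j : Fin k, σ t j = if j = 0 then β ^ (m+1) else 0 := by
      intro j
      rw [hσ, htmod, htdiv]
      congr 1
      exact propext ⟨fun h => Fin.ext (by simpa using h), fun h => by simp [h]⟩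
    simp only [this]
    rw [Finset.sum_ite_eq' Finset.univ (0 : Fin k)]
    simp
  have hn2 : norm1 (fun j => superCand σ t j) = β ^ (m+1) + ((k:ℝ) - 1) * β ^ m := by
    unfold norm1
    simp only [hsup]
    have hrw : ∀ j : Fin k, (if j = 0 then β^(m+1) else β^m)
        = β^m + (if j = 0 then β^(m+1) - β^m else 0) := by
      intro j; split <;> ring
    simp only [hrw]
    rw [Finset.sum_add_distrib, Finset.sum_const, Finset.sum_ite_eq' Finset.univ (0:Fin k)]
    simp [Finset.card_univ]
    ring
  rw [biasedU, hn1, hn2]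
  have : β ^ (m+1) = β * β ^ m := by ring
  rw [hβdef] at this ⊢
  nlinarith [this]
end

section
/- Let k ≥ 2, λ ≥ 0 with λ·(k−1) = 1. Consider the deterministic sequence of n candidates in ℝ^k where the t-th candidate has value ⌈t/k⌉ in coordinate (t mod k) and 0 elsewhere. Then for every candidate index t, the biased gambler's utility U(σ,t) = ‖σ^(t)‖₁ − λ·(‖s^(t)‖₁ − ‖σ^(t)‖₁) is at most 1, while the maximum candidate value max_t ‖σ^(t)‖₁ is at least n/k. -/
open Finset

lemma super_ge {n k : ℕ} (hk : 0 < k) (σ : Fin n → Fin k → ℝ)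
    (hσ : ∀ (t : Fin n) (j : Fin k), σ t j =
      if (j : ℕ) = (t : ℕ) % k then ((t : ℕ) / k + 1 : ℝ) else 0)
    (t : Fin n) (j : Fin k) :
    (if (j : ℕ) ≤ (t : ℕ) % k then (((t : ℕ) / k : ℕ) : ℝ) + 1 else (((t : ℕ) / k : ℕ) : ℝ))
      ≤ superCand σ t j := by
  set q := (t : ℕ) / k with hq
  set r := (t : ℕ) % k with hr
  have htqr : k * q + r = (t : ℕ) := Nat.div_add_mod _ _
  have hrk : r < k := Nat.mod_lt _ hk
  have hkR : (0 : ℝ) < (k : ℝ) := by exact_mod_cast hk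
  by_cases h : (j : ℕ) ≤ r
  · rw [if_pos h]
    have hwn : k * q + (j : ℕ) < n := by
      have hj : (j : ℕ) ≤ r := h
      omega
    set w : Fin n := ⟨k * q + (j : ℕ), hwn⟩ with hw
    have hmem : w ∈ Finset.Iic t := by
      refine Finset.mem_Iic.2 (Fin.le_def.2 ?_)
      show k * q + (j : ℕ) ≤ (t : ℕ)
      omega
    have hmod : (w : ℕ) % k = (j : ℕ) := by
      show (k * q + (j : ℕ)) % k = (j : ℕ)
      rw [Nat.mul_add_mod, Nat.mod_eq_of_lt j.isLt]
    have hval : σ w j = ((k * q + (j : ℕ) : ℕ) : ℝ) / k + 1 := by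
      rw [hσ, if_pos hmod.symm]
    have hb : ((q : ℝ)) + 1 ≤ σ w j := by
      rw [hval]
      have : ((q : ℝ)) ≤ ((k * q + (j : ℕ) : ℕ) : ℝ) / k := by
        rw [le_div_iff₀ hkR]
        push_cast
        nlinarith [Nat.cast_nonneg (α := ℝ) (j : ℕ)]
      linarith
    exact le_trans hb (by unfold superCand; exact Finset.le_sup' (fun w => σ w j) hmem)
  · rw [if_neg h]
    rcases Nat.eq_zero_or_pos q with hq0 | hq1
    · have hval : σ t j = 0 := by
        rw [hσ, if_neg]
        omega
      have : ((q : ℝ)) ≤ σ t j := by rw [hval, hq0]; norm_num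
      exact le_trans this (by unfold superCand; exact Finset.le_sup' (fun w => σ w j) (Finset.mem_Iic.2 le_rfl))
    · obtain ⟨q1, hq1e⟩ : ∃ q1, q = q1 + 1 := ⟨q - 1, by omega⟩
      have hwn : k * q1 + (j : ℕ) < n := by
        have h1 : k * q1 + (j : ℕ) < k * q := by
          have : j.1 < k := j.isLt
          nlinarith [hq1e]
        omega
      set w : Fin n := ⟨k * q1 + (j : ℕ), hwn⟩ with hw
      have hmem : w ∈ Finset.Iic t := by
        refine Finset.mem_Iic.2 (Fin.le_def.2 ?_)
        show k * q1 + (j : ℕ) ≤ (t : ℕ)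
        have : j.1 < k := j.isLt
        nlinarith [hq1e]
      have hmod : (w : ℕ) % k = (j : ℕ) := by
        show (k * q1 + (j : ℕ)) % k = (j : ℕ)
        rw [Nat.mul_add_mod, Nat.mod_eq_of_lt j.isLt]
      have hval : σ w j = ((k * q1 + (j : ℕ) : ℕ) : ℝ) / k + 1 := by
        rw [hσ, if_pos hmod.symm]
      have hb : ((q : ℝ)) ≤ σ w j := by
        rw [hval]
        have h2 : ((q1 : ℝ)) ≤ ((k * q1 + (j : ℕ) : ℕ) : ℝ) / k := by
          rw [le_div_iff₀ hkR]
          push_cast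
          nlinarith [Nat.cast_nonneg (α := ℝ) (j : ℕ)]
        have h3 : ((q : ℝ)) = (q1 : ℝ) + 1 := by exact_mod_cast congrArg (Nat.cast : ℕ → ℝ) hq1e
        linarith
      exact le_trans hb (by unfold superCand; exact Finset.le_sup' (fun w => σ w j) hmem)

theorem stmt1 (n k : ℕ) (lam : ℝ) (hk : 2 ≤ k) (hlam : 0 ≤ lam)
    (hβ : lam * ((k : ℝ) - 1) = 1)
    (σ : Fin n → Fin k → ℝ)
    (hσ : ∀ (t : Fin n) (j : Fin k), σ t j =
      if (j : ℕ) = (t : ℕ) % k then ((t : ℕ) / k + 1 : ℝ) else 0)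
    (hn : 0 < n) :
    (∀ t, biasedU lam σ t ≤ 1) ∧ (∃ t, (n : ℝ) / k ≤ norm1 (σ t)) := by
  have hk0 : 0 < k := by omega
  have hkR : (0 : ℝ) < (k : ℝ) := by exact_mod_cast hk0
  have hnorm : ∀ t : Fin n, norm1 (σ t) = ((t : ℕ) : ℝ) / k + 1 := by
    intro t
    have hrk : (t : ℕ) % k < k := Nat.mod_lt _ hk0
    unfold norm1
    have heq : ∀ j : Fin k, σ t j =
        if j = (⟨(t : ℕ) % k, hrk⟩ : Fin k) then (((t : ℕ) : ℝ) / k + 1) else 0 := by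
      intro j
      rw [hσ]
      congr 1
      simp [Fin.ext_iff]
    simp_rw [heq]
    rw [Finset.sum_ite_eq' Finset.univ]
    simp
  constructor
  · intro t
    set q := (t : ℕ) / k with hq
    set r := (t : ℕ) % k with hr
    have htqr : k * q + r = (t : ℕ) := Nat.div_add_mod _ _
    have hrk : r < k := Nat.mod_lt _ hk0
    -- lower bound on super sum
    have hS : ((t : ℕ) : ℝ) + 1 ≤ norm1 (fun j => superCand σ t j) := by
      unfold norm1
      have hsum : ∑ j : Fin k,
          (if (j : ℕ) ≤ r then ((q : ℕ) : ℝ) + 1 else ((q : ℕ) : ℝ)) ≤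
          ∑ j : Fin k, superCand σ t j :=
        Finset.sum_le_sum (fun j _ => super_ge hk0 σ hσ t j)
      have hcalc : ∑ j : Fin k,
          (if (j : ℕ) ≤ r then ((q : ℕ) : ℝ) + 1 else ((q : ℕ) : ℝ)) =
          (k : ℝ) * q + (r + 1) := by
        have hsplit : ∀ j : Fin k,
            (if (j : ℕ) ≤ r then ((q : ℕ) : ℝ) + 1 else ((q : ℕ) : ℝ)) =
            ((q : ℕ) : ℝ) + (if (j : ℕ) ≤ r then (1 : ℝ) else 0) := by
          intro j; split_ifs <;> ring
        simp_rw [hsplit]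
        rw [Finset.sum_add_distrib, Finset.sum_const, Finset.sum_boole]
        have hcard : (Finset.filter (fun j : Fin k => (j : ℕ) ≤ r) Finset.univ).card
            = r + 1 := by
          rw [Finset.card_filter]
          rw [Fin.sum_univ_eq_sum_range (fun i => if i ≤ r then 1 else 0)]
          have hrng : Finset.range k = Finset.range (r + 1) ∪
              (Finset.filter (fun i => ¬ i ≤ r) (Finset.range k)) := by
            ext i; simp; omega
          rw [hrng, Finset.sum_union]
          · have h1 : ∑ i ∈ Finset.range (r + 1), (if i ≤ r then 1 else 0) = r + 1 := by
              rw [Finset.sum_ite_of_true]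
              · simp
              · intro i hi; simp at hi; omega
            have h2 : ∑ i ∈ Finset.filter (fun i => ¬ i ≤ r) (Finset.range k),
                (if i ≤ r then 1 else 0) = 0 := by
              apply Finset.sum_eq_zero
              intro i hi; simp at hi; simp; omega
            rw [h1, h2]
          · rw [Finset.disjoint_left]
            intro a ha hb
            simp at ha hb
            omega
        rw [hcard]
        simp only [Finset.card_univ, Fintype.card_fin, nsmul_eq_mul]
        push_cast
        ring
      have htR : ((t : ℕ) : ℝ) + 1 ≤ (k : ℝ) * q + (r + 1) := by
        have : ((t : ℕ) : ℝ) = (k : ℝ) * q + r := by exact_mod_cast htqr.symm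
        linarith
      linarith
    unfold biasedU
    rw [hnorm]
    set S := norm1 (fun j => superCand σ t j) with hSdef
    set a := ((t : ℕ) : ℝ) / k with ha
    have hak : a * k = ((t : ℕ) : ℝ) := div_mul_cancel₀ _ (ne_of_gt hkR)
    have ha0 : 0 ≤ a := by positivity
    have h1 : a * ((k : ℝ) - 1) ≤ S - a - 1 := by nlinarith
    have h2 : lam * (a * ((k : ℝ) - 1)) ≤ lam * (S - a - 1) :=
      mul_le_mul_of_nonneg_left h1 hlam
    have h3 : lam * (a * ((k : ℝ) - 1)) = a := by
      rw [show lam * (a * ((k : ℝ) - 1)) = a * (lam * ((k : ℝ) - 1)) by ring, hβ, mul_one]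
    nlinarith
  · refine ⟨⟨n - 1, by omega⟩, ?_⟩
    rw [hnorm]
    have ht : ((⟨n - 1, by omega⟩ : Fin n) : ℕ) = n - 1 := rfl
    rw [ht]
    rw [div_le_iff₀ hkR, add_mul, div_mul_cancel₀ _ (ne_of_gt hkR)]
    have h1 : ((n : ℝ)) ≤ ((n - 1 : ℕ) : ℝ) + k := by
      have : (n : ℕ) ≤ (n - 1) + k := by omega
      exact_mod_cast this
    linarith
end

section
/- Consider the sequence of 2m candidates in ℝ² given by (2^j, 0), (0, 2^j) for j = 0, 1, ..., m−1, in that order (alternating), with loss-aversion parameter λ = 2. Then the biased gambler's utility from selecting the first candidate is 1, and the utility from selecting any other candidate is at most 0, while the maximum candidate value is 2^(m−1). -/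
open Finset

section aux
variable {m : ℕ} (σ : Fin (2 * m) → Fin 2 → ℝ)
variable (hσ : ∀ (t : Fin (2 * m)) (j : Fin 2), σ t j =
      if (j : ℕ) = (t : ℕ) % 2 then (2 : ℝ) ^ ((t : ℕ) / 2) else 0)

include hσ

lemma norm1_eq (t : Fin (2 * m)) : norm1 (σ t) = (2:ℝ) ^ ((t:ℕ)/2) := by
  unfold norm1
  rw [Fin.sum_univ_two, hσ, hσ]
  simp only [Fin.val_zero, Fin.val_one]
  rcases Nat.mod_two_eq_zero_or_one (t:ℕ) with h | h <;> rw [h] <;> norm_num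

lemma sup0 (t : Fin (2 * m)) : superCand σ t 0 = (2:ℝ) ^ ((t:ℕ)/2) := by
  apply le_antisymm
  · apply Finset.sup'_le
    intro w hw
    have hwt : (w:ℕ) ≤ (t:ℕ) := Fin.le_def.1 (Finset.mem_Iic.1 hw)
    rw [hσ]
    split_ifs with h
    · exact pow_le_pow_right₀ one_le_two (by omega)
    · positivity
  · have hle : (⟨2*((t:ℕ)/2), by omega⟩ : Fin (2*m)) ≤ t := by
      simp [Fin.le_def]; omega
    have := Finset.le_sup' (fun w => σ w 0) (Finset.mem_Iic.2 hle)
    refine le_trans (le_of_eq ?_) this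
    rw [hσ]
    simp only [Fin.val_zero]
    rw [if_pos (by omega)]
    congr 1
    omega

lemma sup1 (t : Fin (2 * m)) :
    superCand σ t 1 = if (t:ℕ) = 0 then 0 else (2:ℝ) ^ (((t:ℕ)-1)/2) := by
  split_ifs with h0
  · apply le_antisymm
    · apply Finset.sup'_le
      intro w hw
      have hwt : (w:ℕ) ≤ (t:ℕ) := Fin.le_def.1 (Finset.mem_Iic.1 hw)
      rw [hσ]
      simp only [Fin.val_one] at *
      split_ifs with h
      · exact absurd h (by omega)
      · exact le_refl _
    · have := Finset.le_sup' (fun w => σ w 1) (Finset.mem_Iic.2 (le_refl t))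
      refine le_trans (le_of_eq ?_) this
      rw [hσ]
      rw [if_neg (by simp; omega)]
  · apply le_antisymm
    · apply Finset.sup'_le
      intro w hw
      have hwt : (w:ℕ) ≤ (t:ℕ) := Fin.le_def.1 (Finset.mem_Iic.1 hw)
      rw [hσ]
      split_ifs with h
      · exact pow_le_pow_right₀ one_le_two (by simp at h; omega)
      · positivity
    · have hle : (⟨2*(((t:ℕ)-1)/2)+1, by omega⟩ : Fin (2*m)) ≤ t := by
        simp [Fin.le_def]; omega
      have := Finset.le_sup' (fun w => σ w 1) (Finset.mem_Iic.2 hle)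
      refine le_trans (le_of_eq ?_) this
      rw [hσ]
      simp only [Fin.val_one]
      rw [if_pos (by omega)]
      congr 1
      omega

end aux

theorem stmt2 (m : ℕ) (hm : 1 ≤ m)
    (σ : Fin (2 * m) → Fin 2 → ℝ)
    (hσ : ∀ (t : Fin (2 * m)) (j : Fin 2), σ t j =
      if (j : ℕ) = (t : ℕ) % 2 then (2 : ℝ) ^ ((t : ℕ) / 2) else 0) :
    biasedU 2 σ ⟨0, by omega⟩ = 1 ∧
    (∀ t, t ≠ (⟨0, by omega⟩ : Fin (2 * m)) → biasedU 2 σ t ≤ 0) ∧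
    (∀ t, norm1 (σ t) ≤ (2 : ℝ) ^ (m - 1)) ∧
    (∃ t, norm1 (σ t) = (2 : ℝ) ^ (m - 1)) := by
  have hsum : ∀ t : Fin (2*m), norm1 (fun j => superCand σ t j)
      = superCand σ t 0 + superCand σ t 1 := by
    intro t; unfold norm1; rw [Fin.sum_univ_two]
  refine ⟨?_, ?_, ?_, ?_⟩
  · unfold biasedU
    rw [hsum, norm1_eq σ hσ, sup0 σ hσ, sup1 σ hσ]
    norm_num
  · intro t ht
    have ht0 : (t:ℕ) ≠ 0 := by
      intro h; apply ht; exact Fin.ext h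
    unfold biasedU
    rw [hsum, norm1_eq σ hσ, sup0 σ hσ, sup1 σ hσ, if_neg ht0]
    rcases Nat.even_or_odd (t:ℕ) with h | h
    · obtain ⟨q, hq⟩ := h
      have hq1 : 1 ≤ q := by omega
      have h1 : (t:ℕ)/2 = q := by omega
      have h2 : ((t:ℕ)-1)/2 = q - 1 := by omega
      rw [h1, h2]
      have h3 : (2:ℝ) * 2^(q-1) = 2^q := by
        rw [← pow_succ']; congr 1; omega
      nlinarith [h3]
    · obtain ⟨q, hq⟩ := h
      have h1 : (t:ℕ)/2 = q := by omega
      have h2 : ((t:ℕ)-1)/2 = q := by omega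
      rw [h1, h2]
      have : (0:ℝ) < 2^q := by positivity
      nlinarith
  · intro t
    rw [norm1_eq σ hσ]
    exact pow_le_pow_right₀ one_le_two (by omega)
  · refine ⟨⟨2*m-1, by omega⟩, ?_⟩
    rw [norm1_eq σ hσ]
    congr 1
    simp only []
    omega
end

section
/- Let σ be a sequence of candidates in ℝ^k with nonnegative entries, let T ≥ 0, let λ ≥ 0 with λ·(k−1) < 1, and let t be the smallest index with ‖σ^(t)‖₁ ≥ T. Then the biased gambler's utility at time t satisfies U(σ,t) ≥ ‖σ^(t)‖₁ − λ·(k−1)·T. -/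
open Finset

theorem stmt3 (n k : ℕ) (lam T : ℝ) (hlam : 0 ≤ lam)
    (hfab : lam * ((k : ℝ) - 1) < 1) (hT : 0 ≤ T)
    (σ : Fin n → Fin k → ℝ) (hpos : ∀ t j, 0 ≤ σ t j)
    (t : Fin n) (hbefore : ∀ i : Fin n, i < t → norm1 (σ i) < T)
    (hat : T ≤ norm1 (σ t)) :
    norm1 (σ t) - lam * ((k : ℝ) - 1) * T ≤ biasedU lam σ t := by
  -- pointwise bound: superCand σ t j ≤ max (σ t j) T
  have hsup : ∀ j, superCand σ t j ≤ max (σ t j) T := by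
    intro j
    apply Finset.sup'_le
    intro w hw
    rcases lt_or_eq_of_le (Finset.mem_Iic.1 hw) with h | h
    · refine le_trans ?_ (le_max_right _ _)
      refine le_trans ?_ (hbefore w h).le
      exact Finset.single_le_sum (fun i _ => hpos w i) (Finset.mem_univ j)
    · subst h; exact le_max_left _ _
  -- ∑ min (σ t j) T ≥ T
  have hmin : T ≤ ∑ j, min (σ t j) T := by
    by_cases hex : ∃ j, T ≤ σ t j
    · obtain ⟨j, hj⟩ := hex
      calc T = min (σ t j) T := (min_eq_right hj).symm
        _ ≤ ∑ j, min (σ t j) T :=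
          Finset.single_le_sum (fun i _ => le_min (hpos t i) hT) (Finset.mem_univ j)
    · push_neg at hex
      have : ∑ j, min (σ t j) T = norm1 (σ t) := by
        unfold norm1
        exact Finset.sum_congr rfl (fun j _ => min_eq_left (hex j).le)
      rw [this]; exact hat
  -- key bound on the super candidate's norm
  have hkey : norm1 (fun j => superCand σ t j) - norm1 (σ t) ≤ ((k : ℝ) - 1) * T := by
    have h1 : norm1 (fun j => superCand σ t j) ≤ ∑ j, max (σ t j) T :=
      Finset.sum_le_sum (fun j _ => hsup j)
    have h2 : ∑ j : Fin k, max (σ t j) T = norm1 (σ t) + (k : ℝ) * T - ∑ j, min (σ t j) T := by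
      unfold norm1
      have hpt : ∀ j : Fin k, max (σ t j) T = σ t j + T - min (σ t j) T := fun j => by
        have := max_add_min (σ t j) T; linarith
      rw [Finset.sum_congr rfl (fun j _ => hpt j), Finset.sum_sub_distrib,
        Finset.sum_add_distrib]
      simp [Finset.card_univ, mul_comm]
    nlinarith [hmin, h1, h2]
  unfold biasedU
  have := mul_le_mul_of_nonneg_left hkey hlam
  linarith [this]
end

section
/- Let σ^(1), ..., σ^(t) be vectors in ℝ^k with nonnegative entries, T ≥ 0, and suppose ‖σ^(i)‖₁ < T for all i < t and ‖σ^(t)‖₁ ≥ T. Then the coordinate-wise maximum s^(t) (with s^(t)_j = max_{w ≤ t} σ^(w)_j) satisfies ‖s^(t)‖₁ ≤ ‖σ^(t)‖₁ + (k−1)·T. -/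
open Finset

theorem stmt4 (n k : ℕ) (T : ℝ) (hT : 0 ≤ T)
    (σ : Fin n → Fin k → ℝ) (hpos : ∀ t j, 0 ≤ σ t j)
    (t : Fin n) (hbefore : ∀ i : Fin n, i < t → norm1 (σ i) < T)
    (hat : T ≤ norm1 (σ t)) :
    norm1 (fun j => superCand σ t j) ≤ norm1 (σ t) + ((k : ℝ) - 1) * T := by
  have hsc : ∀ j, superCand σ t j ≤ max (σ t j) T := by
    intro j
    apply Finset.sup'_le
    intro w hw
    rcases eq_or_lt_of_le (Finset.mem_Iic.1 hw) with h | h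
    · rw [h]; exact le_max_left _ _
    · refine le_trans (le_trans ?_ (hbefore w h).le) (le_max_right _ _)
      exact Finset.single_le_sum (fun i _ => hpos w i) (Finset.mem_univ j)
  have hmin : T ≤ ∑ j, min (σ t j) T := by
    by_cases h : ∃ j0, T ≤ σ t j0
    · obtain ⟨j0, hj0⟩ := h
      calc T = min (σ t j0) T := (min_eq_right hj0).symm
        _ ≤ ∑ j, min (σ t j) T :=
          Finset.single_le_sum (fun i _ => le_min (hpos t i) hT) (Finset.mem_univ j0)
    · push_neg at h
      calc T ≤ norm1 (σ t) := hat
        _ = ∑ j, min (σ t j) T :=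
          Finset.sum_congr rfl (fun j _ => (min_eq_left (h j).le).symm)
  have hmaxmin : ∀ j : Fin k, max (σ t j) T = σ t j + T - min (σ t j) T := by
    intro j
    rcases le_total (σ t j) T with h | h <;>
      simp [max_eq_right, max_eq_left, min_eq_left, min_eq_right, h]
  calc norm1 (fun j => superCand σ t j) ≤ ∑ j, max (σ t j) T :=
        Finset.sum_le_sum (fun j _ => hsc j)
    _ = norm1 (σ t) + (k : ℝ) * T - ∑ j, min (σ t j) T := by
        simp [norm1, hmaxmin, Finset.sum_sub_distrib, Finset.sum_add_distrib, mul_comm]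
    _ ≤ norm1 (σ t) + (k : ℝ) * T - T := by linarith
    _ = norm1 (σ t) + ((k : ℝ) - 1) * T := by ring
end
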